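/- Let φ : [0,∞) → [0,∞) be an increasing homeomorphism (a strictly increasing continuous bijection of [0,∞) with φ(0) = 0). The following three conditions are equivalent: (i) M(t,φ) < ∞ for all t > 0, the limits α_φ := lim_{t→0⁺} ln M(t,φ)/ln t and β_φ := lim_{t→∞} ln M(t,φ)/ln t exist in ℝ, and 0 < α_φ ≤ β_φ < ∞; (ii) (condition (Φ)) there exist increasing homeomorphisms ψ₁, ψ₂ : [0,∞) → [0,∞) such that ψ₁(t)φ(x) ≤ φ(tx) ≤ ψ₂(t)φ(x) for all t, x > 0; (iii) (condition (Φ′)) there exist an increasing homeomorphism ψ₁ : [0,∞) → [0,∞) and a function ψ₂ : [0,∞) → [0,∞) such that ψ₁(t)φ(x) ≤ φ(tx) ≤ ψ₂(t)φ(x) for all t, x > 0. -/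

import Mathlib

open Set Filter

/-- `M(t,φ) = sup_{x>0} φ(tx)/φ(x)` (as a real-valued `sSup`; it is the honest
supremum whenever the set is bounded above). -/
noncomputable def Mfun (φ : ℝ → ℝ) (t : ℝ) : ℝ :=
  sSup ((fun x => φ (t * x) / φ x) '' Ioi 0)

/-- `ψ` is an increasing homeomorphism of `[0,∞)` onto itself. -/
def IncHomeoOnIci (ψ : ℝ → ℝ) : Prop :=
  ψ 0 = 0 ∧ StrictMonoOn ψ (Ici 0) ∧ ContinuousOn ψ (Ici 0) ∧
  MapsTo ψ (Ici 0) (Ici 0) ∧ SurjOn ψ (Ici 0) (Ici 0)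

/-! ### Fekete-type lemma for monotone subadditive functions on `ℝ` -/

private lemma fekete_mono (f : ℝ → ℝ) (hmono : Monotone f)
    (hsub : ∀ s t, f (s + t) ≤ f s + f t) (h0 : f 0 = 0)
    (hneg : ∃ s, 0 < s ∧ f (-s) < 0) :
    ∃ α β : ℝ, 0 < α ∧ α ≤ β ∧
      Tendsto (fun s => f s / s) atBot (nhds α) ∧
      Tendsto (fun s => f s / s) atTop (nhds β) := by
  have hpos : ∀ s, 0 ≤ s → 0 ≤ f s := fun s hs => h0 ▸ hmono hs
  have hpair : ∀ s, -f (-s) ≤ f s := by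
    intro s
    have h := hsub s (-s)
    rw [add_neg_cancel, h0] at h
    linarith
  have hnmul : ∀ (n : ℕ) (s : ℝ), f (n * s) ≤ n * f s := by
    intro n
    induction n with
    | zero => intro s; simp [h0]
    | succ n ih =>
      intro s
      have h1 : ((n : ℝ) + 1) * s = (n : ℝ) * s + s := by ring
      have h2 := hsub ((n : ℝ) * s) s
      have h3 := ih s
      push_cast
      rw [h1]
      calc f ((n : ℝ) * s + s) ≤ f ((n : ℝ) * s) + f s := h2
        _ ≤ (n : ℝ) * f s + f s := by linarith
        _ = ((n : ℝ) + 1) * f s := by ring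
  -- the β side
  set B := (fun v : ℝ => f v / v) '' Ioi 0 with hBdef
  have hBne : B.Nonempty := ⟨f 1 / 1, 1, mem_Ioi.2 one_pos, rfl⟩
  have hBbd : BddBelow B := by
    refine ⟨0, ?_⟩
    rintro r ⟨v, hv, rfl⟩
    exact div_nonneg (hpos v (le_of_lt hv)) (le_of_lt hv)
  set β := sInf B with hβdef
  have hβle : ∀ v, 0 < v → β ≤ f v / v := fun v hv => csInf_le hBbd ⟨v, hv, rfl⟩
  have key_upper : ∀ ε, 0 < ε → ∃ S, ∀ s, S ≤ s → f s / s < β + ε := by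
    intro ε hε
    obtain ⟨r, ⟨v, hv, rfl⟩, hr⟩ := exists_lt_of_csInf_lt hBne
      (show β < β + ε / 2 by linarith)
    have hv0 : (0 : ℝ) < v := hv
    have hfv : 0 ≤ f v := hpos v hv0.le
    obtain ⟨N, hN⟩ := exists_nat_gt (f v / (v * (ε / 2)))
    refine ⟨(N + 1) * v, fun s hs => ?_⟩
    have hs0 : 0 < s := lt_of_lt_of_le (by positivity) hs
    set n := ⌊s / v⌋₊ with hn
    have h1 : (n : ℝ) ≤ s / v := Nat.floor_le (by positivity)
    have h2 : s / v < (n : ℝ) + 1 := Nat.lt_floor_add_one _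
    have hnv : (n : ℝ) * v ≤ s := by
      rw [← le_div_iff₀ hv0]; exact h1
    have hsn : s < ((n : ℝ) + 1) * v := by
      rw [← div_lt_iff₀ hv0]; exact h2
    have hNn : N + 1 ≤ n := by
      apply Nat.le_floor
      rw [le_div_iff₀ hv0]
      push_cast
      exact hs
    have hNnR : (N : ℝ) + 1 ≤ (n : ℝ) := by exact_mod_cast hNn
    have hn0 : (0 : ℝ) < (n : ℝ) := by
      have : (0:ℝ) ≤ (N:ℝ) := Nat.cast_nonneg N
      linarith
    have hnv0 : (0 : ℝ) < (n : ℝ) * v := by positivity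
    have hfs : f s ≤ ((n : ℝ) + 1) * f v := by
      have ha : f s ≤ f (((n : ℝ) + 1) * v) := hmono hsn.le
      have hb := hnmul (n + 1) v
      push_cast at hb
      linarith
    have hdiv1 : f s / s ≤ (((n : ℝ) + 1) * f v) / ((n : ℝ) * v) :=
      div_le_div₀ (by positivity) hfs hnv0 hnv
    have heq : (((n : ℝ) + 1) * f v) / ((n : ℝ) * v) = f v / v + f v / ((n : ℝ) * v) := by
      field_simp
    have hlast : f v / ((n : ℝ) * v) < ε / 2 := by
      rw [div_lt_iff₀ hnv0]
      have hNv : f v < (N : ℝ) * (v * (ε / 2)) := by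
        rw [div_lt_iff₀ (by positivity)] at hN
        exact hN
      nlinarith
    linarith [hdiv1, heq ▸ hdiv1]
  have hβtop : Tendsto (fun s => f s / s) atTop (nhds β) := by
    rw [Metric.tendsto_atTop]
    intro ε hε
    obtain ⟨S, hS⟩ := key_upper ε hε
    refine ⟨max S 1, fun s hs => ?_⟩
    have hs1 : (1 : ℝ) ≤ s := le_trans (le_max_right _ _) hs
    have hs0 : (0 : ℝ) < s := lt_of_lt_of_le one_pos hs1
    rw [Real.dist_eq, abs_sub_lt_iff]
    constructor
    · linarith [hS s (le_trans (le_max_left _ _) hs)]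
    · linarith [hβle s hs0]
  -- the α side
  set h : ℝ → ℝ := fun u => -f (-u) with hhdef
  have hhmono : Monotone h := fun u w huw => neg_le_neg (hmono (neg_le_neg huw))
  have hhpos : ∀ u, 0 ≤ u → 0 ≤ h u := by
    intro u hu
    have : f (-u) ≤ f 0 := hmono (by linarith)
    simp only [hhdef]
    rw [h0] at this
    linarith
  have hhnmul : ∀ (n : ℕ) (u : ℝ), (n : ℝ) * h u ≤ h ((n : ℝ) * u) := by
    intro n u
    have h1 := hnmul n (-u)
    have h2 : -((n : ℝ) * u) = (n : ℝ) * (-u) := by ring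
    simp only [hhdef]
    rw [h2]
    linarith
  have hAle : ∀ u, 0 < u → h u / u ≤ β := by
    intro u hu
    have htmul : Tendsto (fun m : ℕ => ((m : ℝ)) * u) atTop atTop :=
      Tendsto.atTop_mul_const hu tendsto_natCast_atTop_atTop
    have hcomp : Tendsto (fun m : ℕ => f ((m : ℝ) * u) / ((m : ℝ) * u)) atTop (nhds β) :=
      hβtop.comp htmul
    refine ge_of_tendsto hcomp ?_
    filter_upwards [eventually_ge_atTop 1] with m hm
    have hm0 : (0 : ℝ) < (m : ℝ) := by exact_mod_cast Nat.pos_of_ne_zero (by omega)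
    have h1 : (m : ℝ) * h u ≤ h ((m : ℝ) * u) := hhnmul m u
    have h2 : h ((m : ℝ) * u) ≤ f ((m : ℝ) * u) := hpair _
    rw [div_le_div_iff₀ hu (by positivity)]
    nlinarith
  set A := (fun u : ℝ => h u / u) '' Ioi 0 with hAdef
  have hAne : A.Nonempty := ⟨h 1 / 1, 1, mem_Ioi.2 one_pos, rfl⟩
  have hAbd : BddAbove A := by
    refine ⟨β, ?_⟩
    rintro r ⟨u, hu, rfl⟩
    exact hAle u hu
  set α := sSup A with hαdef
  have hαge : ∀ u, 0 < u → h u / u ≤ α := fun u hu => le_csSup hAbd ⟨u, hu, rfl⟩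
  have hαβ : α ≤ β := csSup_le hAne (by rintro r ⟨u, hu, rfl⟩; exact hAle u hu)
  have hαpos : 0 < α := by
    obtain ⟨s₁, hs₁, hfneg⟩ := hneg
    have : 0 < h s₁ / s₁ := div_pos (by simp only [hhdef]; linarith) hs₁
    linarith [hαge s₁ hs₁]
  have key_lower : ∀ ε, 0 < ε → ∃ S, ∀ u, S ≤ u → α - ε < h u / u := by
    intro ε hε
    obtain ⟨r, ⟨u₀, hu₀, rfl⟩, hr⟩ := exists_lt_of_lt_csSup hAne
      (show α - ε / 2 < α by linarith)
    have hu00 : (0 : ℝ) < u₀ := hu₀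
    have hh0 : 0 ≤ h u₀ := hhpos u₀ hu00.le
    obtain ⟨N, hN⟩ := exists_nat_gt (h u₀ / (u₀ * (ε / 2)))
    refine ⟨(N + 1) * u₀, fun u hu => ?_⟩
    have hu0 : 0 < u := lt_of_lt_of_le (by positivity) hu
    set n := ⌊u / u₀⌋₊ with hn
    have h1 : (n : ℝ) ≤ u / u₀ := Nat.floor_le (by positivity)
    have h2 : u / u₀ < (n : ℝ) + 1 := Nat.lt_floor_add_one _
    have hnu : (n : ℝ) * u₀ ≤ u := by rw [← le_div_iff₀ hu00]; exact h1
    have hun : u < ((n : ℝ) + 1) * u₀ := by rw [← div_lt_iff₀ hu00]; exact h2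
    have hNn : N + 1 ≤ n := by
      apply Nat.le_floor
      rw [le_div_iff₀ hu00]
      push_cast
      exact hu
    have hNnR : (N : ℝ) + 1 ≤ (n : ℝ) := by exact_mod_cast hNn
    have hn0 : (0 : ℝ) < (n : ℝ) := by
      have : (0:ℝ) ≤ (N:ℝ) := Nat.cast_nonneg N
      linarith
    have hhu : (n : ℝ) * h u₀ ≤ h u := by
      have ha : h ((n : ℝ) * u₀) ≤ h u := hhmono hnu
      have hb := hhnmul n u₀
      linarith
    have hhu0 : 0 ≤ h u := le_trans (by positivity) hhu
    have hdiv1 : ((n : ℝ) * h u₀) / (((n : ℝ) + 1) * u₀) ≤ h u / u :=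
      div_le_div₀ hhu0 hhu hu0 hun.le
    have heq : ((n : ℝ) * h u₀) / (((n : ℝ) + 1) * u₀)
        = h u₀ / u₀ - h u₀ / (((n : ℝ) + 1) * u₀) := by
      have hne : ((n : ℝ) + 1) ≠ 0 := by positivity
      field_simp
      ring
    have hlast : h u₀ / (((n : ℝ) + 1) * u₀) < ε / 2 := by
      rw [div_lt_iff₀ (by positivity)]
      have hNv : h u₀ < (N : ℝ) * (u₀ * (ε / 2)) := by
        rw [div_lt_iff₀ (by positivity)] at hN
        exact hN
      nlinarith
    have := heq ▸ hdiv1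
    linarith
  have hαtop : Tendsto (fun u => h u / u) atTop (nhds α) := by
    rw [Metric.tendsto_atTop]
    intro ε hε
    obtain ⟨S, hS⟩ := key_lower ε hε
    refine ⟨max S 1, fun u hu => ?_⟩
    have hu1 : (1 : ℝ) ≤ u := le_trans (le_max_right _ _) hu
    have hu0 : (0 : ℝ) < u := lt_of_lt_of_le one_pos hu1
    rw [Real.dist_eq, abs_sub_lt_iff]
    constructor
    · linarith [hαge u hu0]
    · linarith [hS u (le_trans (le_max_left _ _) hu)]
  have hαbot : Tendsto (fun s : ℝ => f s / s) atBot (nhds α) := by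
    have hcomp := hαtop.comp tendsto_neg_atBot_atTop
    refine hcomp.congr fun s => ?_
    show h (-s) / (-s) = f s / s
    simp only [hhdef, neg_neg]
    rw [neg_div_neg_eq]
  exact ⟨α, β, hαpos, hαβ, hαbot, hβtop⟩

private lemma phi_pos {φ : ℝ → ℝ} (hφ : IncHomeoOnIci φ) {x : ℝ} (hx : 0 < x) : 0 < φ x := by
  have := hφ.2.1 (self_mem_Ici) (mem_Ici.2 hx.le) hx
  rwa [hφ.1] at this

private lemma M_elem_le {φ : ℝ → ℝ} {t : ℝ}
    (hbdd : BddAbove ((fun x => φ (t * x) / φ x) '' Ioi 0)) {x : ℝ} (hx : 0 < x) :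
    φ (t * x) / φ x ≤ Mfun φ t :=
  le_csSup hbdd ⟨x, mem_Ioi.2 hx, rfl⟩

private lemma M_le {φ : ℝ → ℝ} {t c : ℝ} (h : ∀ x, 0 < x → φ (t * x) / φ x ≤ c) :
    Mfun φ t ≤ c :=
  csSup_le ⟨_, ⟨1, mem_Ioi.2 one_pos, rfl⟩⟩ (by rintro r ⟨x, hx, rfl⟩; exact h x hx)

private lemma M_pos {φ : ℝ → ℝ} (hφ : IncHomeoOnIci φ) {t : ℝ}
    (hbdd : BddAbove ((fun x => φ (t * x) / φ x) '' Ioi 0)) (ht : 0 < t) :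
    0 < Mfun φ t := by
  have h1 : 0 < φ (t * 1) / φ 1 :=
    div_pos (phi_pos hφ (by linarith [mul_one t])) (phi_pos hφ one_pos)
  exact lt_of_lt_of_le h1 (M_elem_le hbdd one_pos)

private lemma M_mono {φ : ℝ → ℝ} (hφ : IncHomeoOnIci φ) {s t : ℝ}
    (hbdd : BddAbove ((fun x => φ (t * x) / φ x) '' Ioi 0))
    (hs : 0 < s) (hst : s ≤ t) : Mfun φ s ≤ Mfun φ t := by
  apply M_le
  intro x hx
  have h1 : φ (s * x) ≤ φ (t * x) :=
    hφ.2.1.monotoneOn (mem_Ici.2 (by positivity)) (mem_Ici.2 (by nlinarith))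
      (mul_le_mul_of_nonneg_right hst hx.le)
  calc φ (s * x) / φ x ≤ φ (t * x) / φ x := by
        gcongr
        exact (phi_pos hφ hx).le
    _ ≤ Mfun φ t := M_elem_le hbdd hx


private lemma M_submul {φ : ℝ → ℝ} (hφ : IncHomeoOnIci φ) {s t : ℝ}
    (hbs : BddAbove ((fun x => φ (s * x) / φ x) '' Ioi 0))
    (hbt : BddAbove ((fun x => φ (t * x) / φ x) '' Ioi 0))
    (hs : 0 < s) (ht : 0 < t) : Mfun φ (s * t) ≤ Mfun φ s * Mfun φ t := by
  apply M_le
  intro x hx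
  have htx : 0 < t * x := mul_pos ht hx
  have hφtx : φ (t * x) ≠ 0 := ne_of_gt (phi_pos hφ htx)
  have heq : φ (s * t * x) / φ x = (φ (s * (t * x)) / φ (t * x)) * (φ (t * x) / φ x) := by
    rw [mul_assoc]
    field_simp
  rw [heq]
  have h1 : φ (s * (t * x)) / φ (t * x) ≤ Mfun φ s := M_elem_le hbs htx
  have h2 : φ (t * x) / φ x ≤ Mfun φ t := M_elem_le hbt hx
  have h1' : 0 ≤ φ (s * (t * x)) / φ (t * x) :=
    div_nonneg (phi_pos hφ (by positivity)).le (phi_pos hφ htx).le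
  have h2' : 0 ≤ φ (t * x) / φ x := div_nonneg (phi_pos hφ (by positivity)).le (phi_pos hφ hx).le
  exact mul_le_mul h1 h2 h2' (le_trans h1' h1)

private lemma M_one {φ : ℝ → ℝ} (hφ : IncHomeoOnIci φ) : Mfun φ 1 = 1 := by
  have himg : (fun x => φ (1 * x) / φ x) '' Ioi 0 = {1} := by
    ext r
    simp only [mem_image, mem_Ioi, mem_singleton_iff]
    constructor
    · rintro ⟨x, hx, rfl⟩
      rw [one_mul, div_self (ne_of_gt (phi_pos hφ hx))]
    · rintro rfl
      exact ⟨1, one_pos, by rw [one_mul, div_self (ne_of_gt (phi_pos hφ one_pos))]⟩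
  rw [Mfun, himg, csSup_singleton]


private lemma L1 {φ : ℝ → ℝ} (hφ : IncHomeoOnIci φ)
    (hbdd : ∀ t : ℝ, 0 < t → BddAbove ((fun x => φ (t * x) / φ x) '' Ioi 0))
    (hsmall : ∃ t₀, 0 < t₀ ∧ t₀ < 1 ∧ Mfun φ t₀ < 1) :
    (∀ t : ℝ, 0 < t → BddAbove ((fun x => φ (t * x) / φ x) '' Ioi 0)) ∧
      ∃ α β : ℝ, 0 < α ∧ α ≤ β ∧
        Tendsto (fun t : ℝ => Real.log (Mfun φ t) / Real.log t)
          (nhdsWithin 0 (Ioi 0)) (nhds α) ∧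
        Tendsto (fun t : ℝ => Real.log (Mfun φ t) / Real.log t) atTop (nhds β) := by
  refine ⟨hbdd, ?_⟩
  set f : ℝ → ℝ := fun s => Real.log (Mfun φ (Real.exp s)) with hfdef
  have hMpos : ∀ t, 0 < t → 0 < Mfun φ t := fun t ht => M_pos hφ (hbdd t ht) ht
  have hmono : Monotone f := by
    intro s t hst
    exact Real.log_le_log (hMpos _ (Real.exp_pos s))
      (M_mono hφ (hbdd _ (Real.exp_pos t)) (Real.exp_pos s) (Real.exp_le_exp.2 hst))
  have hsub : ∀ s t, f (s + t) ≤ f s + f t := by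
    intro s t
    have h1 : Mfun φ (Real.exp (s + t)) ≤ Mfun φ (Real.exp s) * Mfun φ (Real.exp t) := by
      rw [Real.exp_add]
      exact M_submul hφ (hbdd _ (Real.exp_pos s)) (hbdd _ (Real.exp_pos t))
        (Real.exp_pos s) (Real.exp_pos t)
    calc f (s + t) ≤ Real.log (Mfun φ (Real.exp s) * Mfun φ (Real.exp t)) :=
          Real.log_le_log (hMpos _ (Real.exp_pos _)) h1
      _ = f s + f t := Real.log_mul (ne_of_gt (hMpos _ (Real.exp_pos s)))
          (ne_of_gt (hMpos _ (Real.exp_pos t)))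
  have h0 : f 0 = 0 := by
    simp only [hfdef, Real.exp_zero, M_one hφ, Real.log_one]
  have hneg : ∃ s, 0 < s ∧ f (-s) < 0 := by
    obtain ⟨t₀, ht₀, ht₁, hM⟩ := hsmall
    refine ⟨-Real.log t₀, by simpa using Real.log_neg ht₀ ht₁, ?_⟩
    simp only [hfdef, neg_neg, Real.exp_log ht₀]
    exact Real.log_neg (hMpos _ ht₀) hM
  obtain ⟨α, β, hα, hαβ, hbot, htop⟩ := fekete_mono f hmono hsub h0 hneg
  refine ⟨α, β, hα, hαβ, ?_, ?_⟩
  · have hcomp := hbot.comp Real.tendsto_log_nhdsGT_zero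
    refine hcomp.congr' ?_
    filter_upwards [self_mem_nhdsWithin] with t ht
    simp only [Function.comp_apply, hfdef, Real.exp_log (mem_Ioi.1 ht)]
  · have hcomp := htop.comp Real.tendsto_log_atTop
    refine hcomp.congr' ?_
    filter_upwards [eventually_gt_atTop 0] with t ht
    simp only [Function.comp_apply, hfdef, Real.exp_log ht]


private lemma mk_inc {ψ : ℝ → ℝ} (h0 : ψ 0 = 0) (hm : StrictMonoOn ψ (Ici 0))
    (hc : ContinuousOn ψ (Ici 0)) (htop : Tendsto ψ atTop atTop) : IncHomeoOnIci ψ := by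
  have hmap : MapsTo ψ (Ici 0) (Ici 0) := by
    intro x hx
    rcases eq_or_lt_of_le (mem_Ici.1 hx) with h | h
    · simp [← h, h0]
    · exact mem_Ici.2 (by rw [← h0]; exact (hm self_mem_Ici hx h).le)
  refine ⟨h0, hm, hc, hmap, ?_⟩
  intro y hy
  obtain ⟨b, hb1, hb2⟩ := ((htop.eventually_ge_atTop y).and (eventually_ge_atTop 0)).exists
  have hsub : Icc (ψ 0) (ψ b) ⊆ ψ '' Icc 0 b :=
    intermediate_value_Icc hb2 (hc.mono Icc_subset_Ici_self)
  have hyin : y ∈ Icc (ψ 0) (ψ b) := ⟨by rw [h0]; exact mem_Ici.1 hy, hb1⟩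
  obtain ⟨x, hx, hxy⟩ := hsub hyin
  exact ⟨x, hx.1, hxy⟩

private lemma L2 {φ : ℝ → ℝ} (hφ : IncHomeoOnIci φ)
    (hyp : (∀ t : ℝ, 0 < t → BddAbove ((fun x => φ (t * x) / φ x) '' Ioi 0)) ∧
      ∃ α β : ℝ, 0 < α ∧ α ≤ β ∧
        Tendsto (fun t : ℝ => Real.log (Mfun φ t) / Real.log t)
          (nhdsWithin 0 (Ioi 0)) (nhds α) ∧
        Tendsto (fun t : ℝ => Real.log (Mfun φ t) / Real.log t) atTop (nhds β)) :
    ∃ ψ₁ ψ₂ : ℝ → ℝ, IncHomeoOnIci ψ₁ ∧ IncHomeoOnIci ψ₂ ∧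
      ∀ t : ℝ, 0 < t → ∀ x : ℝ, 0 < x →
        ψ₁ t * φ x ≤ φ (t * x) ∧ φ (t * x) ≤ ψ₂ t * φ x := by
  obtain ⟨hbdd, α, β, hα, hαβ, hbot, htop⟩ := hyp
  have hMpos : ∀ t, 0 < t → 0 < Mfun φ t := fun t ht => M_pos hφ (hbdd t ht) ht
  set γ := α / 2 with hγdef
  set δ := β + 1 with hδdef
  have hγ : 0 < γ := by simp only [hγdef]; linarith
  have hδ : 0 < δ := by simp only [hδdef]; linarith
  have hγδ : γ ≤ δ := by simp only [hγdef, hδdef]; linarith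
  -- bound near zero
  have h1 : ∀ᶠ t in nhdsWithin (0:ℝ) (Ioi 0), γ < Real.log (Mfun φ t) / Real.log t :=
    hbot.eventually_const_lt (by simp only [hγdef]; linarith)
  obtain ⟨t₁, ht₁mem, ht₁⟩ := mem_nhdsGT_iff_exists_Ioo_subset.1 h1
  have ht₁0 : (0:ℝ) < t₁ := ht₁mem
  set τ := min t₁ 1 / 2 with hτdef
  have hτ0 : 0 < τ := by
    apply div_pos _ two_pos
    exact lt_min ht₁0 one_pos
  have hτ1 : τ < 1 := by
    have : min t₁ 1 ≤ 1 := min_le_right _ _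
    simp only [hτdef]; linarith
  have hsmall : ∀ t, 0 < t → t ≤ τ → Mfun φ t < t ^ γ := by
    intro t ht htτ
    have htlt1 : t < 1 := lt_of_le_of_lt htτ hτ1
    have htlt : t < t₁ := by
      have h1 : min t₁ 1 ≤ t₁ := min_le_left _ _
      have h2 : τ < min t₁ 1 := by
        simp only [hτdef]
        linarith [lt_min ht₁0 one_pos]
      linarith
    have hmem := ht₁ (⟨ht, htlt⟩ : t ∈ Ioo 0 t₁)
    have hlogt : Real.log t < 0 := Real.log_neg ht htlt1
    have hlt : Real.log (Mfun φ t) < γ * Real.log t := by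
      have := (lt_div_iff_of_neg hlogt).1 hmem
      linarith
    calc Mfun φ t = Real.exp (Real.log (Mfun φ t)) := (Real.exp_log (hMpos t ht)).symm
      _ < Real.exp (γ * Real.log t) := Real.exp_lt_exp.2 hlt
      _ = t ^ γ := by rw [Real.rpow_def_of_pos ht, mul_comm]
  -- bound at infinity
  have h2 : ∀ᶠ t in atTop, Real.log (Mfun φ t) / Real.log t < δ :=
    htop.eventually_lt_const (by simp only [hδdef]; linarith)
  obtain ⟨T₀, hT₀⟩ := eventually_atTop.1 h2
  set T := max T₀ 2 with hTdef
  have hT2 : (2:ℝ) ≤ T := le_max_right _ _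
  have hT0 : (0:ℝ) < T := by linarith
  have hTbig : ∀ t, T ≤ t → Mfun φ t < t ^ δ := by
    intro t ht
    have ht1 : (1:ℝ) < t := by linarith
    have hlog : 0 < Real.log t := Real.log_pos ht1
    have hd := hT₀ t (le_trans (le_max_left _ _) ht)
    have hlt : Real.log (Mfun φ t) < δ * Real.log t := by
      rw [div_lt_iff₀ hlog] at hd
      linarith
    calc Mfun φ t = Real.exp (Real.log (Mfun φ t)) :=
          (Real.exp_log (hMpos t (by linarith))).symm
      _ < Real.exp (δ * Real.log t) := Real.exp_lt_exp.2 hlt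
      _ = t ^ δ := by rw [Real.rpow_def_of_pos (by linarith : (0:ℝ) < t), mul_comm]
  set C := Mfun φ T with hCdef
  have hC : 0 < C := hMpos T hT0
  have hτγ0 : 0 < τ ^ γ := Real.rpow_pos_of_pos hτ0 _
  set A := max 1 (C / τ ^ γ) with hAdef
  have hA1 : (1:ℝ) ≤ A := le_max_left _ _
  have hA0 : (0:ℝ) < A := by linarith
  -- global bound on M
  have hMbound : ∀ t, 0 < t → Mfun φ t ≤ A * (t ^ γ + t ^ δ) := by
    intro t ht
    have hrγ : (0:ℝ) ≤ t ^ γ := (Real.rpow_pos_of_pos ht _).le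
    have hrδ : (0:ℝ) ≤ t ^ δ := (Real.rpow_pos_of_pos ht _).le
    rcases le_or_gt t τ with hcase | hcase
    · have hh := (hsmall t ht hcase).le
      nlinarith
    · rcases le_or_gt t T with hc2 | hc2
      · have hMt : Mfun φ t ≤ C := M_mono hφ (hbdd T hT0) ht hc2
        have hτγ : τ ^ γ ≤ t ^ γ := Real.rpow_le_rpow hτ0.le hcase.le hγ.le
        have hCA : C / τ ^ γ ≤ A := le_max_right _ _
        have : C ≤ A * t ^ γ := by
          calc C = (C / τ ^ γ) * τ ^ γ := by field_simp
            _ ≤ A * t ^ γ := mul_le_mul hCA hτγ hτγ0.le (by linarith)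
        nlinarith
      · have hh := (hTbig t hc2.le).le
        nlinarith
  -- define the two homeomorphisms
  have hcγ : ContinuousOn (fun x : ℝ => x ^ γ) (Ici 0) := fun x _ =>
    (Real.continuousAt_rpow_const x γ (Or.inr hγ.le)).continuousWithinAt
  have hcδ : ContinuousOn (fun x : ℝ => x ^ δ) (Ici 0) := fun x _ =>
    (Real.continuousAt_rpow_const x δ (Or.inr hδ.le)).continuousWithinAt
  refine ⟨fun t => min (t ^ γ) (t ^ δ) / (2 * A), fun t => A * (t ^ γ + t ^ δ), ?_, ?_, ?_⟩
  · -- ψ₁ is an increasing homeomorphism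
    apply mk_inc
    · simp [Real.zero_rpow (ne_of_gt hγ), Real.zero_rpow (ne_of_gt hδ)]
    · intro x hx y _ hxy
      have e1 : x ^ γ < y ^ γ := Real.rpow_lt_rpow (mem_Ici.1 hx) hxy hγ
      have e2 : x ^ δ < y ^ δ := Real.rpow_lt_rpow (mem_Ici.1 hx) hxy hδ
      have : min (x ^ γ) (x ^ δ) < min (y ^ γ) (y ^ δ) :=
        lt_min (lt_of_le_of_lt (min_le_left _ _) e1) (lt_of_le_of_lt (min_le_right _ _) e2)
      exact (div_lt_div_iff_of_pos_right (by positivity)).2 this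
    · exact (hcγ.inf hcδ).div_const _
    · apply tendsto_atTop_mono' atTop
        (show (fun t : ℝ => t ^ γ / (2 * A)) ≤ᶠ[atTop]
          (fun t => min (t ^ γ) (t ^ δ) / (2 * A)) from ?_)
        (Tendsto.atTop_div_const (by positivity) (tendsto_rpow_atTop hγ))
      filter_upwards [eventually_ge_atTop (1:ℝ)] with t ht
      have : t ^ γ ≤ t ^ δ := Real.rpow_le_rpow_of_exponent_le ht hγδ
      rw [min_eq_left this]
  · -- ψ₂ is an increasing homeomorphism
    apply mk_inc
    · simp [Real.zero_rpow (ne_of_gt hγ), Real.zero_rpow (ne_of_gt hδ)]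
    · intro x hx y _ hxy
      have e1 : x ^ γ < y ^ γ := Real.rpow_lt_rpow (mem_Ici.1 hx) hxy hγ
      have e2 : x ^ δ < y ^ δ := Real.rpow_lt_rpow (mem_Ici.1 hx) hxy hδ
      exact mul_lt_mul_of_pos_left (by linarith) hA0
    · exact continuousOn_const.mul (hcγ.add hcδ)
    · exact (Tendsto.atTop_add_atTop (tendsto_rpow_atTop hγ) (tendsto_rpow_atTop hδ)).const_mul_atTop hA0
  · -- the inequalities
    intro t ht x hx
    have hφx : 0 < φ x := phi_pos hφ hx
    have hφtx : 0 < φ (t * x) := phi_pos hφ (mul_pos ht hx)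
    have hgt : 0 < t ^ γ := Real.rpow_pos_of_pos ht _
    have hdt : 0 < t ^ δ := Real.rpow_pos_of_pos ht _
    constructor
    · -- lower bound
      have hMinv : φ x / φ (t * x) ≤ Mfun φ t⁻¹ := by
        have h := M_elem_le (hbdd t⁻¹ (by positivity)) (mul_pos ht hx)
        rwa [show t⁻¹ * (t * x) = x by field_simp] at h
      have hψinv : Mfun φ t⁻¹ ≤ A * ((t ^ γ)⁻¹ + (t ^ δ)⁻¹) := by
        have h := hMbound t⁻¹ (by positivity)
        rwa [Real.inv_rpow ht.le, Real.inv_rpow ht.le] at h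
      have hx2 : φ x ≤ A * ((t ^ γ)⁻¹ + (t ^ δ)⁻¹) * φ (t * x) := by
        rw [div_le_iff₀ hφtx] at hMinv
        calc φ x ≤ Mfun φ t⁻¹ * φ (t * x) := hMinv
          _ ≤ A * ((t ^ γ)⁻¹ + (t ^ δ)⁻¹) * φ (t * x) :=
            mul_le_mul_of_nonneg_right hψinv hφtx.le
      have hψ₁nn : 0 ≤ min (t ^ γ) (t ^ δ) / (2 * A) := by positivity
      have hprod : (min (t ^ γ) (t ^ δ) / (2 * A)) * (A * ((t ^ γ)⁻¹ + (t ^ δ)⁻¹)) ≤ 1 := by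
        have e1 : min (t ^ γ) (t ^ δ) * (t ^ γ)⁻¹ ≤ 1 := by
          rw [← div_eq_mul_inv, div_le_one hgt]
          exact min_le_left _ _
        have e2 : min (t ^ γ) (t ^ δ) * (t ^ δ)⁻¹ ≤ 1 := by
          rw [← div_eq_mul_inv, div_le_one hdt]
          exact min_le_right _ _
        have heq : (min (t ^ γ) (t ^ δ) / (2 * A)) * (A * ((t ^ γ)⁻¹ + (t ^ δ)⁻¹))
            = (min (t ^ γ) (t ^ δ) * (t ^ γ)⁻¹ + min (t ^ γ) (t ^ δ) * (t ^ δ)⁻¹) / 2 := by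
          field_simp
        rw [heq]
        linarith
      calc min (t ^ γ) (t ^ δ) / (2 * A) * φ x
          ≤ min (t ^ γ) (t ^ δ) / (2 * A) * (A * ((t ^ γ)⁻¹ + (t ^ δ)⁻¹) * φ (t * x)) :=
            mul_le_mul_of_nonneg_left hx2 hψ₁nn
        _ = (min (t ^ γ) (t ^ δ) / (2 * A) * (A * ((t ^ γ)⁻¹ + (t ^ δ)⁻¹))) * φ (t * x) := by
            ring
        _ ≤ 1 * φ (t * x) := mul_le_mul_of_nonneg_right hprod hφtx.le
        _ = φ (t * x) := one_mul _
    · -- upper bound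
      have h1 : φ (t * x) / φ x ≤ Mfun φ t := M_elem_le (hbdd t ht) hx
      rw [div_le_iff₀ hφx] at h1
      calc φ (t * x) ≤ Mfun φ t * φ x := h1
        _ ≤ A * (t ^ γ + t ^ δ) * φ x :=
          mul_le_mul_of_nonneg_right (hMbound t ht) hφx.le


private lemma E31 {φ : ℝ → ℝ} (hφ : IncHomeoOnIci φ)
    (hyp : ∃ ψ₁ ψ₂ : ℝ → ℝ, IncHomeoOnIci ψ₁ ∧ (∀ t : ℝ, 0 ≤ t → 0 ≤ ψ₂ t) ∧
      ∀ t : ℝ, 0 < t → ∀ x : ℝ, 0 < x →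
        ψ₁ t * φ x ≤ φ (t * x) ∧ φ (t * x) ≤ ψ₂ t * φ x) :
    (∀ t : ℝ, 0 < t → BddAbove ((fun x => φ (t * x) / φ x) '' Ioi 0)) ∧
    ∃ t₀, 0 < t₀ ∧ t₀ < 1 ∧ Mfun φ t₀ < 1 := by
  obtain ⟨ψ₁, ψ₂, hψ₁, _, hbound⟩ := hyp
  have hbdd : ∀ t : ℝ, 0 < t → BddAbove ((fun x => φ (t * x) / φ x) '' Ioi 0) := by
    intro t ht
    refine ⟨ψ₂ t, ?_⟩
    rintro r ⟨x, hx, rfl⟩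
    have h := (hbound t ht x hx).2
    rw [div_le_iff₀ (phi_pos hφ (mem_Ioi.1 hx))]
    exact h
  refine ⟨hbdd, ?_⟩
  obtain ⟨u, hu_mem, hu⟩ := hψ₁.2.2.2.2 (show (2:ℝ) ∈ Ici 0 by norm_num)
  have hu0 : 0 < u := by
    rcases eq_or_lt_of_le (mem_Ici.1 hu_mem) with h | h
    · exfalso; rw [← h, hψ₁.1] at hu; norm_num at hu
    · exact h
  set t₀ := min (1/2) (1/(2*u)) with ht₀def
  have ht₀0 : 0 < t₀ := lt_min (by norm_num) (by positivity)
  have ht₀1 : t₀ < 1 := lt_of_le_of_lt (min_le_left _ _) (by norm_num)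
  refine ⟨t₀, ht₀0, ht₀1, ?_⟩
  have hinv : u < t₀⁻¹ := by
    have h1 : t₀ ≤ 1/(2*u) := min_le_right _ _
    rw [le_div_iff₀ (by positivity)] at h1
    have h2 : 2*u ≤ t₀⁻¹ := by
      rw [show t₀⁻¹ = 1/t₀ from (one_div t₀).symm, le_div_iff₀ ht₀0]
      nlinarith
    linarith
  have hψbig : 2 < ψ₁ t₀⁻¹ := by
    rw [← hu]
    exact hψ₁.2.1 hu_mem (mem_Ici.2 (by positivity)) hinv
  have hψpos : 0 < ψ₁ t₀⁻¹ := by linarith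
  have hMle : Mfun φ t₀ ≤ (ψ₁ t₀⁻¹)⁻¹ := by
    apply M_le
    intro x hx
    have hb := (hbound t₀⁻¹ (by positivity) (t₀ * x) (by positivity)).1
    rw [show t₀⁻¹ * (t₀ * x) = x by field_simp] at hb
    rw [div_le_iff₀ (phi_pos hφ hx)]
    have h3 : ψ₁ t₀⁻¹ * (ψ₁ t₀⁻¹)⁻¹ = 1 := mul_inv_cancel₀ (ne_of_gt hψpos)
    nlinarith [hb, phi_pos hφ hx, phi_pos hφ (mul_pos ht₀0 hx)]
  have : (ψ₁ t₀⁻¹)⁻¹ < 1 := inv_lt_one_of_one_lt₀ (by linarith)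
  linarith

theorem indices_Phi_Phi'_equivalent
    (φ : ℝ → ℝ) (hφ : IncHomeoOnIci φ) :
    -- (i)
    (((∀ t : ℝ, 0 < t → BddAbove ((fun x => φ (t * x) / φ x) '' Ioi 0)) ∧
      ∃ α β : ℝ, 0 < α ∧ α ≤ β ∧
        Tendsto (fun t : ℝ => Real.log (Mfun φ t) / Real.log t)
          (nhdsWithin 0 (Ioi 0)) (nhds α) ∧
        Tendsto (fun t : ℝ => Real.log (Mfun φ t) / Real.log t) atTop (nhds β))
    ↔
    -- (ii) : condition (Φ)
    (∃ ψ₁ ψ₂ : ℝ → ℝ, IncHomeoOnIci ψ₁ ∧ IncHomeoOnIci ψ₂ ∧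
      ∀ t : ℝ, 0 < t → ∀ x : ℝ, 0 < x →
        ψ₁ t * φ x ≤ φ (t * x) ∧ φ (t * x) ≤ ψ₂ t * φ x))
    ∧
    -- (ii) ↔ (iii) : condition (Φ′)
    ((∃ ψ₁ ψ₂ : ℝ → ℝ, IncHomeoOnIci ψ₁ ∧ IncHomeoOnIci ψ₂ ∧
      ∀ t : ℝ, 0 < t → ∀ x : ℝ, 0 < x →
        ψ₁ t * φ x ≤ φ (t * x) ∧ φ (t * x) ≤ ψ₂ t * φ x)
    ↔
    (∃ ψ₁ ψ₂ : ℝ → ℝ, IncHomeoOnIci ψ₁ ∧ (∀ t : ℝ, 0 ≤ t → 0 ≤ ψ₂ t) ∧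
      ∀ t : ℝ, 0 < t → ∀ x : ℝ, 0 < x →
        ψ₁ t * φ x ≤ φ (t * x) ∧ φ (t * x) ≤ ψ₂ t * φ x)) := by
  have e23 : (∃ ψ₁ ψ₂ : ℝ → ℝ, IncHomeoOnIci ψ₁ ∧ IncHomeoOnIci ψ₂ ∧
      ∀ t : ℝ, 0 < t → ∀ x : ℝ, 0 < x →
        ψ₁ t * φ x ≤ φ (t * x) ∧ φ (t * x) ≤ ψ₂ t * φ x) →
      (∃ ψ₁ ψ₂ : ℝ → ℝ, IncHomeoOnIci ψ₁ ∧ (∀ t : ℝ, 0 ≤ t → 0 ≤ ψ₂ t) ∧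
      ∀ t : ℝ, 0 < t → ∀ x : ℝ, 0 < x →
        ψ₁ t * φ x ≤ φ (t * x) ∧ φ (t * x) ≤ ψ₂ t * φ x) := by
    rintro ⟨ψ₁, ψ₂, h1, h2, h3⟩
    exact ⟨ψ₁, ψ₂, h1, fun t ht => mem_Ici.1 (h2.2.2.2.1 (mem_Ici.2 ht)), h3⟩
  constructor
  · constructor
    · exact fun hi => L2 hφ hi
    · intro hii
      obtain ⟨hb, hs⟩ := E31 hφ (e23 hii)
      exact L1 hφ hb hs
  · constructor
    · exact e23
    · intro hiii
      obtain ⟨hb, hs⟩ := E31 hφ hiii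
      exact L2 hφ (L1 hφ hb hs)
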